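/- arXiv:2601.19179 — 2 statements merged into one kernel-verified Lean document; each statement's English description precedes it below -/
import Mathlib

section
/- Let Σ be a p×p real positive semi-definite matrix with eigenvalues λ₁ ≥ ⋯ ≥ λ_p ≥ 0 and let Γ = diag(γ₁,…,γ_p) with 0 ≤ γ₁ < ⋯ < γ_p. If U is an orthogonal matrix achieving Tr(Γ^{1/2} Uᵀ Σ U Γ^{1/2}) = Σ_{i=1}^{p} λ_i γ_i, then for each i the i-th column of U is a unit eigenvector of Σ with eigenvalue λ_i. -/
open Matrix BigOperators

/-- `μ` is the sequence of eigenvalues of `A` (with multiplicity) listed in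
decreasing order. -/
def IsDecrEigSeq {p : ℕ} (A : Matrix (Fin p) (Fin p) ℝ) (μ : Fin p → ℝ) : Prop :=
  Antitone μ ∧ ∃ u : Fin p → (Fin p → ℝ),
    (∀ i j, u i ⬝ᵥ u j = if i = j then (1 : ℝ) else 0) ∧
    (∀ i, A.mulVec (u i) = μ i • u i)



lemma tele (g : ℕ → ℝ) {a b : ℕ} (h : a ≤ b) :
    ∑ m ∈ Finset.Ico a b, (g m - g (m+1)) = g a - g b := by
  induction b, h using Nat.le_induction with
  | base => simp
  | succ b hab ih => rw [Finset.sum_Ico_succ_top hab, ih]; ring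

lemma tri_swap (p : ℕ) (F : ℕ → ℕ → ℝ) :
    ∑ k ∈ Finset.range p, ∑ m ∈ Finset.Ico k p, F k m
      = ∑ m ∈ Finset.range p, ∑ k ∈ Finset.range (m+1), F k m := by
  have h1 : ∀ k ∈ Finset.range p, ∑ m ∈ Finset.Ico k p, F k m
      = ∑ m ∈ Finset.range p, if k ≤ m then F k m else 0 := by
    intro k hk
    rw [← Finset.sum_filter]
    apply Finset.sum_congr _ (fun _ _ => rfl)
    ext m
    simp only [Finset.mem_Ico, Finset.mem_filter, Finset.mem_range]
    omega
  rw [Finset.sum_congr rfl h1, Finset.sum_comm]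
  refine Finset.sum_congr rfl fun m hm => ?_
  rw [← Finset.sum_filter]
  apply Finset.sum_congr _ (fun _ _ => rfl)
  ext k
  simp only [Finset.mem_range] at hm ⊢
  simp only [Finset.mem_filter, Finset.mem_range]
  omega

lemma key_ineq (p : ℕ) (lam γ : ℕ → ℝ) (D : ℕ → ℕ → ℝ)
    (hD0 : ∀ k i, 0 ≤ D k i)
    (hrow : ∀ k, k < p → ∑ i ∈ Finset.range p, D k i = 1)
    (hcol : ∀ i, i < p → ∑ k ∈ Finset.range p, D k i = 1)
    (hanti : ∀ a b, a ≤ b → b < p → lam b ≤ lam a)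
    (hlam0 : ∀ i, i < p → 0 ≤ lam i)
    (hγ : ∀ a b, a < b → b < p → γ a < γ b)
    (heq : ∑ i ∈ Finset.range p, ∑ k ∈ Finset.range p, γ i * (lam k * D k i)
        = ∑ i ∈ Finset.range p, γ i * lam i) :
    ∀ k, k < p → ∀ i, i < p → D k i ≠ 0 → lam k = lam i := by
  classical
  set g : ℕ → ℝ := fun m => if m < p then lam m else 0 with hg
  set δ : ℕ → ℝ := fun m => g m - g (m+1) with hδ
  have hδ0 : ∀ m, m < p → 0 ≤ δ m := by
    intro m hm
    simp only [hδ, hg]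
    by_cases h1 : m + 1 < p
    · simp only [hm, h1, if_true]
      linarith [hanti m (m+1) (Nat.le_succ m) h1]
    · simp only [hm, h1, if_true, if_false, sub_zero]
      exact hlam0 m hm
  have hlamtele : ∀ k, k < p → lam k = ∑ m ∈ Finset.Ico k p, δ m := by
    intro k hk
    have := tele g (le_of_lt hk)
    simp only [hg] at this
    rw [hδ]
    rw [this]
    simp [hk]
  -- c m i
  set c : ℕ → ℕ → ℝ := fun m i => ∑ k ∈ Finset.range (m+1), D k i with hc
  have hc0 : ∀ m i, 0 ≤ c m i := fun m i =>
    Finset.sum_nonneg fun k _ => hD0 k i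
  have hcsplit : ∀ m i, m < p → c m i + ∑ k ∈ Finset.Ico (m+1) p, D k i
      = ∑ k ∈ Finset.range p, D k i := by
    intro m i hm
    rw [hc]
    exact Finset.sum_range_add_sum_Ico _ hm
  have hc1 : ∀ m i, m < p → i < p → c m i ≤ 1 := by
    intro m i hm hi
    have h := hcsplit m i hm
    rw [hcol i hi] at h
    have : 0 ≤ ∑ k ∈ Finset.Ico (m+1) p, D k i :=
      Finset.sum_nonneg fun k _ => hD0 k i
    linarith
  have hcsum : ∀ m, m < p → ∑ i ∈ Finset.range p, c m i = (m+1 : ℕ) := by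
    intro m hm
    rw [hc]
    rw [Finset.sum_comm]
    rw [Finset.sum_congr rfl (fun k hk => hrow k (by
      simp only [Finset.mem_range] at hk; omega))]
    simp
  -- the inner quantity Q m
  set Q : ℕ → ℝ := fun m => ∑ i ∈ Finset.range p,
      (γ i - γ m) * (c m i - if i ≤ m then 1 else 0) with hQ
  have hQ0 : ∀ m, m < p → 0 ≤ Q m := by
    intro m hm
    apply Finset.sum_nonneg
    intro i hi
    simp only [Finset.mem_range] at hi
    by_cases h : i ≤ m
    · simp only [h, if_true]
      have h1 : γ i - γ m ≤ 0 := by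
        rcases lt_or_eq_of_le h with h' | h'
        · linarith [hγ i m h' hm]
        · subst h'; simp
      have h2 : c m i - 1 ≤ 0 := by linarith [hc1 m i hm hi]
      nlinarith [mul_nonneg (neg_nonneg.mpr h1) (neg_nonneg.mpr h2)]
    · simp only [h, if_false, sub_zero]
      have h1 : 0 ≤ γ i - γ m := by
        push_neg at h
        linarith [hγ m i h hi]
      exact mul_nonneg h1 (hc0 m i)
  -- identity: Q m = ∑ γ i * c m i - ∑_{i≤m} γ i
  have hQid : ∀ m, m < p → Q m = (∑ i ∈ Finset.range p, γ i * c m i)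
      - ∑ i ∈ Finset.range (m+1), γ i := by
    intro m hm
    have hfilt : (Finset.range p).filter (fun i => i ≤ m) = Finset.range (m+1) := by
      ext i
      simp only [Finset.mem_filter, Finset.mem_range]
      omega
    have hchi : ∑ i ∈ Finset.range p, (if i ≤ m then (1:ℝ) else 0) = (m+1 : ℕ) := by
      rw [← Finset.sum_filter, hfilt]
      simp
    have hgchi : ∑ i ∈ Finset.range p, γ i * (if i ≤ m then (1:ℝ) else 0)
        = ∑ i ∈ Finset.range (m+1), γ i := by
      rw [Finset.sum_congr rfl (fun i _ => by rw [mul_ite, mul_one, mul_zero]),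
        ← Finset.sum_filter, hfilt]
    simp only [hQ]
    have expand : ∀ i, (γ i - γ m) * (c m i - if i ≤ m then (1:ℝ) else 0)
        = γ i * c m i - γ i * (if i ≤ m then (1:ℝ) else 0)
          - γ m * c m i + γ m * (if i ≤ m then (1:ℝ) else 0) := by
      intro i; ring
    rw [Finset.sum_congr rfl (fun i _ => expand i)]
    rw [Finset.sum_add_distrib, Finset.sum_sub_distrib, Finset.sum_sub_distrib,
      ← Finset.mul_sum, ← Finset.mul_sum, hgchi, hchi, hcsum m hm]
    ring
  -- rewrite LHS of heq
  have hLHS : ∑ i ∈ Finset.range p, ∑ k ∈ Finset.range p, γ i * (lam k * D k i)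
      = ∑ m ∈ Finset.range p, δ m * ∑ i ∈ Finset.range p, γ i * c m i := by
    have step1 : ∀ i ∈ Finset.range p, ∑ k ∈ Finset.range p, γ i * (lam k * D k i)
        = ∑ m ∈ Finset.range p, ∑ k ∈ Finset.range (m+1), δ m * (γ i * D k i) := by
      intro i hi
      rw [← tri_swap p (fun k m => δ m * (γ i * D k i))]
      apply Finset.sum_congr rfl
      intro k hk
      simp only [Finset.mem_range] at hk
      rw [hlamtele k hk, Finset.sum_mul, Finset.mul_sum]
      apply Finset.sum_congr rfl
      intro m hm
      ring
    rw [Finset.sum_congr rfl step1, Finset.sum_comm]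
    apply Finset.sum_congr rfl
    intro m hm
    rw [Finset.mul_sum]
    apply Finset.sum_congr rfl
    intro i hi
    rw [hc, Finset.mul_sum, Finset.mul_sum]
  have hRHS : ∑ i ∈ Finset.range p, γ i * lam i
      = ∑ m ∈ Finset.range p, δ m * ∑ i ∈ Finset.range (m+1), γ i := by
    have step1 : ∀ i ∈ Finset.range p, γ i * lam i
        = ∑ m ∈ Finset.Ico i p, γ i * δ m := by
      intro i hi
      simp only [Finset.mem_range] at hi
      rw [hlamtele i hi, Finset.mul_sum]
    rw [Finset.sum_congr rfl step1, tri_swap p (fun i m => γ i * δ m)]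
    apply Finset.sum_congr rfl
    intro m hm
    rw [Finset.mul_sum]
    apply Finset.sum_congr rfl
    intro i hi
    ring
  have hzero : ∑ m ∈ Finset.range p, δ m * Q m = 0 := by
    have : ∑ m ∈ Finset.range p, δ m * Q m
        = ∑ m ∈ Finset.range p, (δ m * ∑ i ∈ Finset.range p, γ i * c m i
          - δ m * ∑ i ∈ Finset.range (m+1), γ i) := by
      apply Finset.sum_congr rfl
      intro m hm
      simp only [Finset.mem_range] at hm
      rw [hQid m hm]
      ring
    rw [this, Finset.sum_sub_distrib, ← hLHS, ← hRHS, heq, sub_self]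
  have heach : ∀ m ∈ Finset.range p, δ m * Q m = 0 := by
    rw [← Finset.sum_eq_zero_iff_of_nonneg]
    · exact hzero
    · intro m hm
      simp only [Finset.mem_range] at hm
      exact mul_nonneg (hδ0 m hm) (hQ0 m hm)
  -- per-m structure when δ m > 0
  have hstruct : ∀ m, m < p → δ m ≠ 0 →
      (∀ i, i < p → m < i → c m i = 0) ∧ (∀ i, i < p → i ≤ m → c m i = 1) := by
    intro m hm hδm
    have hQm : Q m = 0 := by
      have := heach m (Finset.mem_range.mpr hm)
      rcases mul_eq_zero.mp this with h | h
      · exact absurd h hδm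
      · exact h
    have hterm : ∀ i ∈ Finset.range p,
        (γ i - γ m) * (c m i - if i ≤ m then 1 else 0) = 0 := by
      rw [← Finset.sum_eq_zero_iff_of_nonneg]
      · exact hQm
      · intro i hi
        simp only [Finset.mem_range] at hi
        by_cases h : i ≤ m
        · simp only [h, if_true]
          have h1 : γ i - γ m ≤ 0 := by
            rcases lt_or_eq_of_le h with h' | h'
            · linarith [hγ i m h' hm]
            · subst h'; simp
          have h2 : c m i - 1 ≤ 0 := by linarith [hc1 m i hm hi]
          nlinarith [mul_nonneg (neg_nonneg.mpr h1) (neg_nonneg.mpr h2)]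
        · simp only [h, if_false, sub_zero]
          push_neg at h
          exact mul_nonneg (by linarith [hγ m i h hi]) (hc0 m i)
    have hgt : ∀ i, i < p → m < i → c m i = 0 := by
      intro i hi hmi
      have := hterm i (Finset.mem_range.mpr hi)
      rw [if_neg (by omega)] at this
      rcases mul_eq_zero.mp this with h | h
      · exfalso; have := hγ m i hmi hi; linarith [sub_eq_zero.mp h]
      · rw [sub_zero] at h; exact h
    have hlt : ∀ i, i < p → i < m → c m i = 1 := by
      intro i hi him
      have := hterm i (Finset.mem_range.mpr hi)
      rw [if_pos (le_of_lt him)] at this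
      rcases mul_eq_zero.mp this with h | h
      · exfalso; have := hγ i m him hm; linarith [sub_eq_zero.mp h]
      · linarith [sub_eq_zero.mp h]
    refine ⟨hgt, ?_⟩
    -- c m m = 1 from the sum
    have hcmm : c m m = 1 := by
      have hsum := hcsum m hm
      have hsplit : ∑ i ∈ Finset.range p, c m i
          = (∑ i ∈ Finset.range m, c m i) + c m m
            + ∑ i ∈ Finset.Ico (m+1) p, c m i := by
        rw [← Finset.sum_range_succ, Finset.sum_range_add_sum_Ico _ hm]
      have h1 : ∑ i ∈ Finset.range m, c m i = (m : ℝ) := by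
        rw [Finset.sum_congr rfl (fun i hi => hlt i
          (by simp only [Finset.mem_range] at hi; omega)
          (Finset.mem_range.mp hi))]
        simp
      have h2 : ∑ i ∈ Finset.Ico (m+1) p, c m i = 0 := by
        apply Finset.sum_eq_zero
        intro i hi
        simp only [Finset.mem_Ico] at hi
        exact hgt i hi.2 (by omega)
      rw [hsplit, h1, h2] at hsum
      push_cast at hsum
      linarith
    intro i hi him
    rcases lt_or_eq_of_le him with h' | h'
    · exact hlt i hi h'
    · subst h'; exact hcmm
  -- final extraction
  intro k hk i hi hDki
  by_contra hne
  rcases Nat.lt_trichotomy k i with hki | hki | hki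
  · -- k < i, lam k > lam i
    have hlt : lam i < lam k := lt_of_le_of_ne (hanti k i (le_of_lt hki) hi)
      (fun h => hne h.symm)
    have hsum : ∑ m ∈ Finset.Ico k i, δ m = lam k - lam i := by
      have h1 := tele g (le_of_lt hki)
      simp only [hg] at h1
      rw [hδ]
      rw [h1, if_pos hk, if_pos hi]
    have : ∃ m ∈ Finset.Ico k i, δ m ≠ 0 := by
      by_contra hall
      push_neg at hall
      have : ∑ m ∈ Finset.Ico k i, δ m = 0 := Finset.sum_eq_zero hall
      rw [hsum] at this; linarith
    obtain ⟨m, hm, hδm⟩ := this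
    simp only [Finset.mem_Ico] at hm
    have hmp : m < p := lt_trans hm.2 hi
    have hc0' := (hstruct m hmp hδm).1 i hi (lt_of_lt_of_le hm.2 (le_refl i))
    -- c m i = 0 but D k i > 0 with k ≤ m
    have : D k i = 0 := by
      have hle : ∀ k' ∈ Finset.range (m+1), 0 ≤ D k' i := fun k' _ => hD0 k' i
      have := (Finset.sum_eq_zero_iff_of_nonneg hle).mp hc0' k
        (Finset.mem_range.mpr (by omega))
      exact this
    exact hDki this
  · exact absurd (by rw [hki]) hne
  · -- i < k, lam i > lam k
    have hlt : lam k < lam i := lt_of_le_of_ne (hanti i k (le_of_lt hki) hk) hne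
    have hsum : ∑ m ∈ Finset.Ico i k, δ m = lam i - lam k := by
      have h1 := tele g (le_of_lt hki)
      simp only [hg] at h1
      rw [hδ]
      rw [h1, if_pos hi, if_pos hk]
    have : ∃ m ∈ Finset.Ico i k, δ m ≠ 0 := by
      by_contra hall
      push_neg at hall
      have : ∑ m ∈ Finset.Ico i k, δ m = 0 := Finset.sum_eq_zero hall
      rw [hsum] at this; linarith
    obtain ⟨m, hm, hδm⟩ := this
    simp only [Finset.mem_Ico] at hm
    have hmp : m < p := lt_trans hm.2 hk
    have hc1' := (hstruct m hmp hδm).2 i hi hm.1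
    -- c m i = 1, column sum = 1, so tail sum = 0, D k i = 0 since m < k
    have htail : ∑ k' ∈ Finset.Ico (m+1) p, D k' i = 0 := by
      have := hcsplit m i hmp
      rw [hcol i hi, hc1'] at this
      linarith
    have : D k i = 0 := by
      have hle : ∀ k' ∈ Finset.Ico (m+1) p, 0 ≤ D k' i := fun k' _ => hD0 k' i
      exact (Finset.sum_eq_zero_iff_of_nonneg hle).mp htail k
        (Finset.mem_Ico.mpr ⟨by omega, hk⟩)
    exact hDki this

theorem columns_are_eigenvectors_of_optimal {p : ℕ}
    (S : Matrix (Fin p) (Fin p) ℝ) (hS : S.PosSemidef)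
    (lam : Fin p → ℝ) (hlam : IsDecrEigSeq S lam)
    (γ : Fin p → ℝ) (hγpos : ∀ i, 0 ≤ γ i) (hγmono : StrictMono γ)
    (U : Matrix (Fin p) (Fin p) ℝ) (hU : Uᵀ * U = 1)
    (hopt : (Matrix.diagonal (fun i => Real.sqrt (γ i)) * Uᵀ * S * U *
        Matrix.diagonal (fun i => Real.sqrt (γ i))).trace
      = ∑ i : Fin p, lam i * γ i) :
    ∀ i : Fin p,
      (fun j => U j i) ⬝ᵥ (fun j => U j i) = 1 ∧
      S.mulVec (fun j => U j i) = lam i • (fun j => U j i) := by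
  classical
  obtain ⟨hanti, u, huo, hue⟩ := hlam
  set P : Matrix (Fin p) (Fin p) ℝ := Matrix.of u with hPdef
  have hPapp : ∀ k a, P k a = u k a := fun k a => rfl
  have hPPt : P * Pᵀ = 1 := by
    ext i j
    have := huo i j
    simp only [dotProduct] at this
    simp [Matrix.mul_apply, Matrix.transpose_apply, hPapp, Matrix.one_apply, this]
  have hPtP : Pᵀ * P = 1 := mul_eq_one_comm.mp hPPt
  have hlam0 : ∀ i, 0 ≤ lam i := by
    intro i
    have h := hS.dotProduct_mulVec_nonneg (u i)
    rw [hue i] at h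
    have hnorm := huo i i
    simp only [if_pos rfl] at hnorm
    simp only [star_trivial, dotProduct_smul, smul_eq_mul, hnorm, mul_one] at h
    simpa using h
  have hSP : S = Pᵀ * Matrix.diagonal lam * P := by
    have h1 : S * Pᵀ = Pᵀ * Matrix.diagonal lam := by
      ext a k
      have h := congrFun (hue k) a
      simp only [Matrix.mulVec, dotProduct, Pi.smul_apply, smul_eq_mul] at h
      rw [Matrix.mul_diagonal, Matrix.mul_apply]
      simp only [Matrix.transpose_apply, hPapp]
      rw [h]; ring
    calc S = S * (Pᵀ * P) := by rw [hPtP, Matrix.mul_one]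
      _ = (S * Pᵀ) * P := by rw [Matrix.mul_assoc]
      _ = Pᵀ * Matrix.diagonal lam * P := by rw [h1]
  set W : Matrix (Fin p) (Fin p) ℝ := P * U with hWdef
  have hWtW : Wᵀ * W = 1 := by
    rw [hWdef, Matrix.transpose_mul, Matrix.mul_assoc, ← Matrix.mul_assoc Pᵀ,
      hPtP, Matrix.one_mul, hU]
  have hWWt : W * Wᵀ = 1 := mul_eq_one_comm.mp hWtW
  have hrowsq : ∀ k, ∑ i : Fin p, (W k i)^2 = 1 := by
    intro k
    have := congrFun (congrFun hWWt k) k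
    simp only [Matrix.mul_apply, Matrix.transpose_apply, Matrix.one_apply_eq] at this
    rw [← this]
    exact Finset.sum_congr rfl fun i _ => (sq (W k i)).symm ▸ (pow_two (W k i))
  have hcolsq : ∀ i, ∑ k : Fin p, (W k i)^2 = 1 := by
    intro i
    have := congrFun (congrFun hWtW i) i
    simp only [Matrix.mul_apply, Matrix.transpose_apply, Matrix.one_apply_eq] at this
    rw [← this]
    exact Finset.sum_congr rfl fun k _ => by rw [pow_two]
  have hUSU : Uᵀ * S * U = Wᵀ * Matrix.diagonal lam * W := by
    rw [hSP, hWdef, Matrix.transpose_mul]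
    simp only [Matrix.mul_assoc]
  -- the trace identity
  have htrace : (Matrix.diagonal (fun i => Real.sqrt (γ i)) * Uᵀ * S * U *
        Matrix.diagonal (fun i => Real.sqrt (γ i))).trace
      = ∑ i : Fin p, ∑ k : Fin p, γ i * (lam k * (W k i)^2) := by
    rw [Matrix.trace]
    apply Finset.sum_congr rfl
    intro i _
    rw [Matrix.diag_apply, Matrix.mul_diagonal]
    have hassoc : Matrix.diagonal (fun i => Real.sqrt (γ i)) * Uᵀ * S * U
        = Matrix.diagonal (fun i => Real.sqrt (γ i)) * (Uᵀ * S * U) := by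
      simp only [Matrix.mul_assoc]
    rw [hassoc, Matrix.diagonal_mul, hUSU]
    have hdiag : (Wᵀ * Matrix.diagonal lam * W) i i
        = ∑ k : Fin p, lam k * (W k i)^2 := by
      rw [Matrix.mul_apply]
      apply Finset.sum_congr rfl
      intro k _
      rw [Matrix.mul_diagonal, Matrix.transpose_apply]
      ring
    rw [hdiag, Finset.mul_sum, Finset.sum_mul]
    apply Finset.sum_congr rfl
    intro k _
    have h2 : Real.sqrt (γ i) * Real.sqrt (γ i) = γ i := Real.mul_self_sqrt (hγpos i)
    linear_combination (lam k * W k i ^ 2) * h2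
  -- set up ℕ-valued data for key_ineq
  set lam' : ℕ → ℝ := fun n => if h : n < p then lam ⟨n, h⟩ else 0 with hlam'
  set γ' : ℕ → ℝ := fun n => if h : n < p then γ ⟨n, h⟩ else 0 with hγ'
  set D' : ℕ → ℕ → ℝ := fun k i =>
    if h : k < p ∧ i < p then (W ⟨k, h.1⟩ ⟨i, h.2⟩)^2 else 0 with hD'
  have hlam'co : ∀ x : Fin p, lam' (x : ℕ) = lam x := by
    intro x; simp only [hlam', dif_pos x.isLt, Fin.eta]
  have hγ'co : ∀ x : Fin p, γ' (x : ℕ) = γ x := by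
    intro x; simp only [hγ', dif_pos x.isLt, Fin.eta]
  have hD'co : ∀ k i : Fin p, D' (k : ℕ) (i : ℕ) = (W k i)^2 := by
    intro k i
    simp only [hD', dif_pos (And.intro k.isLt i.isLt), Fin.eta]
  have hkey := key_ineq p lam' γ' D'
    (by
      intro k i
      simp only [hD']
      split
      · exact sq_nonneg _
      · exact le_refl 0)
    (by
      intro k hk
      rw [← Fin.sum_univ_eq_sum_range (fun i => D' k i) p]
      calc ∑ i : Fin p, D' k (i : ℕ)
          = ∑ i : Fin p, (W ⟨k, hk⟩ i)^2 := by
            apply Finset.sum_congr rfl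
            intro i _
            simp only [hD', dif_pos (And.intro hk i.isLt), Fin.eta]
        _ = 1 := hrowsq _)
    (by
      intro i hi
      rw [← Fin.sum_univ_eq_sum_range (fun k => D' k i) p]
      calc ∑ k : Fin p, D' (k : ℕ) i
          = ∑ k : Fin p, (W k ⟨i, hi⟩)^2 := by
            apply Finset.sum_congr rfl
            intro k _
            simp only [hD', dif_pos (And.intro k.isLt hi), Fin.eta]
        _ = 1 := hcolsq _)
    (by
      intro a b hab hb
      have ha : a < p := lt_of_le_of_lt hab hb
      simp only [hlam', dif_pos ha, dif_pos hb]
      exact hanti (show (⟨a, ha⟩ : Fin p) ≤ ⟨b, hb⟩ from hab))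
    (by
      intro i hi
      simp only [hlam', dif_pos hi]
      exact hlam0 _)
    (by
      intro a b hab hb
      have ha : a < p := lt_trans hab hb
      simp only [hγ', dif_pos ha, dif_pos hb]
      exact hγmono (show (⟨a, ha⟩ : Fin p) < ⟨b, hb⟩ from hab))
    (by
      have hL : ∑ i ∈ Finset.range p, ∑ k ∈ Finset.range p, γ' i * (lam' k * D' k i)
          = ∑ i : Fin p, ∑ k : Fin p, γ i * (lam k * (W k i)^2) := by
        rw [← Fin.sum_univ_eq_sum_range
          (fun i => ∑ k ∈ Finset.range p, γ' i * (lam' k * D' k i)) p]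
        apply Finset.sum_congr rfl
        intro i _
        rw [← Fin.sum_univ_eq_sum_range (fun k => γ' (i:ℕ) * (lam' k * D' k (i:ℕ))) p]
        apply Finset.sum_congr rfl
        intro k _
        rw [hγ'co, hlam'co, hD'co]
      have hR : ∑ i ∈ Finset.range p, γ' i * lam' i = ∑ i : Fin p, lam i * γ i := by
        rw [← Fin.sum_univ_eq_sum_range (fun i => γ' i * lam' i) p]
        apply Finset.sum_congr rfl
        intro i _
        rw [hγ'co, hlam'co, mul_comm]
      rw [hL, hR, ← htrace, hopt])
  have hkeyF : ∀ k i : Fin p, W k i ≠ 0 → lam k = lam i := by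
    intro k i hW
    have := hkey (k : ℕ) k.isLt (i : ℕ) i.isLt (by
      rw [hD'co]
      exact pow_ne_zero 2 hW)
    rwa [hlam'co, hlam'co] at this
  -- conclusion
  intro i
  constructor
  · have := congrFun (congrFun hU i) i
    simp only [Matrix.mul_apply, Matrix.transpose_apply, Matrix.one_apply_eq] at this
    simpa [dotProduct] using this
  · have hPv : P.mulVec (fun j => U j i) = fun k => W k i := by
      funext k
      simp only [Matrix.mulVec, dotProduct, hWdef, Matrix.mul_apply, hPapp]
    have hPtW : Pᵀ * W = U := by
      rw [hWdef, ← Matrix.mul_assoc, hPtP, Matrix.one_mul]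
    have hPtWv : Pᵀ.mulVec (fun k => W k i) = fun a => U a i := by
      funext a
      have := congrFun (congrFun hPtW a) i
      simp only [Matrix.mul_apply] at this
      simp only [Matrix.mulVec, dotProduct]
      exact this
    rw [hSP]
    rw [← Matrix.mulVec_mulVec, ← Matrix.mulVec_mulVec, hPv]
    have hdv : (Matrix.diagonal lam).mulVec (fun k => W k i)
        = lam i • (fun k => W k i) := by
      funext k
      rw [Matrix.mulVec_diagonal]
      simp only [Pi.smul_apply, smul_eq_mul]
      by_cases h : W k i = 0
      · simp [h]
      · rw [hkeyF k i h]
    rw [hdv, Matrix.mulVec_smul, hPtWv]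
end

section
/- Let X, Y be i.i.d. random vectors taking values in a metric space (M, d), and let 0 < γ₁ < ⋯ < γ_p < 2. Define R(f) = E[ | ‖f(X) − f(Y)‖² − d(X,Y)² | ] + Σ_{i=1}^{p} γ_i Var[f(X)_i] for measurable f : M → ℝ^p with square-integrable coordinates. Then R(f) ≥ E[ c(X,Y)·d(X,Y)² ] where c(x,y) = ½ θᵀΓθ ∈ (0,1) with θ the unit vector in direction f(x) − f(y) (and the inequality R(f) ≥ (γ₁/2)·E[d(X,Y)²] holds in particular); equality of the pointwise bound holds if and only if ‖f(X) − f(Y)‖² = d(X,Y)² almost surely. -/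
set_option maxHeartbeats 1000000


open MeasureTheory ProbabilityTheory BigOperators

theorem risk_lower_bound
    {Ω M : Type*} [MeasurableSpace Ω] [MetricSpace M] [MeasurableSpace M]
    [BorelSpace M] {p : ℕ} (hp : 0 < p)
    (μ : Measure Ω) [IsProbabilityMeasure μ]
    (X Y : Ω → M) (hX : Measurable X) (hY : Measurable Y)
    (hindep : IndepFun X Y μ) (hid : IdentDistrib X Y μ μ)
    (γ : Fin p → ℝ) (hγmono : StrictMono γ)
    (hγ0 : 0 < γ ⟨0, hp⟩) (hγtop : γ ⟨p - 1, Nat.sub_lt hp one_pos⟩ < 2)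
    (f : M → EuclideanSpace ℝ (Fin p)) (hf : Measurable f)
    (h2 : ∀ i, MemLp (fun ω => f (X ω) i) 2 μ)
    -- `c ω = ½ θᵀΓθ` where `θ` is the unit vector in direction `f(X ω) - f(Y ω)`
    (c : Ω → ℝ)
    (hc : ∀ ω, c ω = (1 / 2) * (∑ i, γ i * (f (X ω) i - f (Y ω) i) ^ 2)
        / ‖f (X ω) - f (Y ω)‖ ^ 2)
    (hint1 : Integrable
      (fun ω => |‖f (X ω) - f (Y ω)‖ ^ 2 - dist (X ω) (Y ω) ^ 2|) μ)
    (hint2 : Integrable (fun ω => dist (X ω) (Y ω) ^ 2) μ)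
    (hint3 : Integrable (fun ω => c ω * dist (X ω) (Y ω) ^ 2) μ) :
    (∫ ω, c ω * dist (X ω) (Y ω) ^ 2 ∂μ ≤
        (∫ ω, |‖f (X ω) - f (Y ω)‖ ^ 2 - dist (X ω) (Y ω) ^ 2| ∂μ)
          + ∑ i, γ i * variance (fun ω => f (X ω) i) μ) ∧
    ((γ ⟨0, hp⟩ / 2) * ∫ ω, dist (X ω) (Y ω) ^ 2 ∂μ ≤
        (∫ ω, |‖f (X ω) - f (Y ω)‖ ^ 2 - dist (X ω) (Y ω) ^ 2| ∂μ)
          + ∑ i, γ i * variance (fun ω => f (X ω) i) μ) ∧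
    (((∫ ω, |‖f (X ω) - f (Y ω)‖ ^ 2 - dist (X ω) (Y ω) ^ 2| ∂μ)
          + ∑ i, γ i * variance (fun ω => f (X ω) i) μ
        = ∫ ω, c ω * dist (X ω) (Y ω) ^ 2 ∂μ) ↔
      (∀ᵐ ω ∂μ, ‖f (X ω) - f (Y ω)‖ ^ 2 = dist (X ω) (Y ω) ^ 2)) := by
  -- notation
  set i0 : Fin p := ⟨0, hp⟩ with hi0
  set itop : Fin p := ⟨p - 1, Nat.sub_lt hp one_pos⟩ with hitop
  set κ : ℝ := γ itop / 2 with hκ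
  have hγpos : ∀ i, 0 < γ i := fun i =>
    lt_of_lt_of_le hγ0 (hγmono.monotone (by simp [hi0, Fin.le_def]))
  have hγle : ∀ i, γ i ≤ γ itop := fun i =>
    hγmono.monotone (by simp only [hitop, Fin.le_def]; omega)
  have hκ0 : 0 ≤ κ := by have := hγpos itop; simp [hκ]; linarith
  have hκ1 : κ < 1 := by simp [hκ]; linarith
  -- the sum S
  set S : Ω → ℝ := fun ω => ∑ i, γ i * (f (X ω) i - f (Y ω) i) ^ 2 with hS
  -- norm squared as sum of squares
  have hnorm : ∀ ω, ‖f (X ω) - f (Y ω)‖ ^ 2 = ∑ i, (f (X ω) i - f (Y ω) i) ^ 2 := by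
    intro ω
    rw [EuclideanSpace.norm_eq, Real.sq_sqrt (by positivity)]
    simp [sq_abs]
  -- pointwise key identity
  have hkey : ∀ ω, c ω * ‖f (X ω) - f (Y ω)‖ ^ 2 = (1 / 2) * S ω := by
    intro ω
    rw [hc ω]
    by_cases hn : ‖f (X ω) - f (Y ω)‖ ^ 2 = 0
    · rw [hn, mul_zero]
      have hsum : ∑ i, (f (X ω) i - f (Y ω) i) ^ 2 = 0 := by rw [← hnorm ω, hn]
      have hz : ∀ i ∈ Finset.univ, (f (X ω) i - f (Y ω) i) ^ 2 = 0 :=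
        (Finset.sum_eq_zero_iff_of_nonneg (fun i _ => sq_nonneg _)).1 hsum
      have : S ω = 0 := Finset.sum_eq_zero fun i hi => by rw [hz i hi, mul_zero]
      rw [this, mul_zero]
    · rw [div_mul_cancel₀ _ hn]
  -- bounds on c
  have hc0 : ∀ ω, 0 ≤ c ω := fun ω => by
    rw [hc ω]
    apply div_nonneg _ (sq_nonneg _)
    have : 0 ≤ ∑ i, γ i * (f (X ω) i - f (Y ω) i) ^ 2 :=
      Finset.sum_nonneg fun i _ => mul_nonneg (hγpos i).le (sq_nonneg _)
    linarith
  have hcκ : ∀ ω, c ω ≤ κ := by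
    intro ω
    rw [hc ω]
    by_cases hn : ‖f (X ω) - f (Y ω)‖ ^ 2 = 0
    · rw [hn, div_zero]; exact hκ0
    · have hpos : 0 < ‖f (X ω) - f (Y ω)‖ ^ 2 := lt_of_le_of_ne (sq_nonneg _) (Ne.symm hn)
      rw [div_le_iff₀ hpos]
      have hb : ∑ i, γ i * (f (X ω) i - f (Y ω) i) ^ 2
          ≤ γ itop * ∑ i, (f (X ω) i - f (Y ω) i) ^ 2 := by
        rw [Finset.mul_sum]
        exact Finset.sum_le_sum fun i _ =>
          mul_le_mul_of_nonneg_right (hγle i) (sq_nonneg _)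
      rw [hnorm ω] at *
      calc 1 / 2 * ∑ i, γ i * (f (X ω) i - f (Y ω) i) ^ 2
          ≤ 1 / 2 * (γ itop * ∑ i, (f (X ω) i - f (Y ω) i) ^ 2) := by linarith
        _ = κ * ∑ i, (f (X ω) i - f (Y ω) i) ^ 2 := by rw [hκ]; ring
  -- helper: c * u ≤ k * |u| for 0 ≤ c ≤ k
  have habs : ∀ (cc k u : ℝ), 0 ≤ cc → cc ≤ k → cc * u ≤ k * |u| := by
    intro cc k u h0 h1
    rcases le_total 0 u with hu | hu
    · calc cc * u ≤ k * u := mul_le_mul_of_nonneg_right h1 hu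
        _ ≤ k * |u| := mul_le_mul_of_nonneg_left (le_abs_self u) (h0.trans h1)
    · exact (mul_nonpos_of_nonneg_of_nonpos h0 hu).trans
        (mul_nonneg (h0.trans h1) (abs_nonneg u))
  -- per-coordinate variance identity
  have hcoord : ∀ i : Fin p,
      ∫ ω, (f (X ω) i - f (Y ω) i) ^ 2 ∂μ = 2 * variance (fun ω => f (X ω) i) μ := by
    intro i
    set g : Ω → ℝ := fun ω => f (X ω) i with hg
    set h : Ω → ℝ := fun ω => f (Y ω) i with hh
    have hφ : Measurable fun m => f m i := (EuclideanSpace.proj i).continuous.measurable.comp hf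
    have hind : IndepFun g h μ := hindep.comp hφ hφ
    have hidgh : IdentDistrib g h μ μ := hid.comp hφ
    have hg2 : MemLp g 2 μ := h2 i
    have hh2 : MemLp h 2 μ := hidgh.memLp_snd hg2
    have hgi := hg2.integrable one_le_two
    have hhi := hh2.integrable one_le_two
    have hmul : Integrable (fun ω => g ω * h ω) μ := hind.integrable_mul hgi hhi
    have e1 : ∀ ω, (g ω - h ω) ^ 2 = g ω ^ 2 - 2 * (g ω * h ω) + h ω ^ 2 := fun ω => by ring
    have hgsq := hg2.integrable_sq
    have hhsq := hh2.integrable_sq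
    show ∫ ω, (g ω - h ω) ^ 2 ∂μ = 2 * variance g μ
    simp_rw [e1]
    rw [integral_add (by exact hgsq.sub (hmul.const_mul 2)) hhsq,
      integral_sub hgsq (by exact hmul.const_mul 2), MeasureTheory.integral_const_mul]
    have hEmul : ∫ ω, g ω * h ω ∂μ = (∫ ω, g ω ∂μ) * (∫ ω, h ω ∂μ) :=
      hind.integral_mul_eq_mul_integral hgi.aestronglyMeasurable hhi.aestronglyMeasurable
    have hEh : ∫ ω, h ω ∂μ = ∫ ω, g ω ∂μ := hidgh.symm.integral_eq
    have hEhsq : ∫ ω, h ω ^ 2 ∂μ = ∫ ω, g ω ^ 2 ∂μ :=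
      ((hidgh.comp (measurable_id.pow_const 2)).symm.integral_eq)
    have hvar := variance_eq_sub hg2
    rw [hEmul, hEh, hEhsq]
    simp only [Pi.pow_apply] at hvar
    nlinarith [hvar]
  -- integrability of S and coordinate squares
  have hsqint : ∀ i : Fin p, Integrable (fun ω => (f (X ω) i - f (Y ω) i) ^ 2) μ := by
    intro i
    have hφ : Measurable fun m => f m i := (EuclideanSpace.proj i).continuous.measurable.comp hf
    have hh2 : MemLp (fun ω => f (Y ω) i) 2 μ := (hid.comp hφ).memLp_snd (h2 i)
    exact ((h2 i).sub hh2).integrable_sq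
  have hSint : Integrable S μ := by
    rw [hS]
    exact integrable_finset_sum _ fun i _ => (hsqint i).const_mul _
  have hSint2 : Integrable (fun ω => (1 / 2) * S ω) μ := hSint.const_mul _
  -- integral of ½ S equals the weighted sum of variances
  have hSvar : ∫ ω, (1 / 2) * S ω ∂μ = ∑ i, γ i * variance (fun ω => f (X ω) i) μ := by
    rw [MeasureTheory.integral_const_mul, hS]
    rw [integral_finset_sum _ fun i _ => (hsqint i).const_mul _]
    rw [Finset.mul_sum]
    congr 1
    ext i
    rw [MeasureTheory.integral_const_mul, hcoord i]
    ring
  -- nonnegativity of S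
  have hSnn : ∀ ω, 0 ≤ S ω := fun ω =>
    Finset.sum_nonneg fun i _ => mul_nonneg (hγpos i).le (sq_nonneg _)
  -- Part 1
  have part1 : ∫ ω, c ω * dist (X ω) (Y ω) ^ 2 ∂μ ≤
      (∫ ω, |‖f (X ω) - f (Y ω)‖ ^ 2 - dist (X ω) (Y ω) ^ 2| ∂μ)
        + ∑ i, γ i * variance (fun ω => f (X ω) i) μ := by
    have hmono : ∀ ω, c ω * dist (X ω) (Y ω) ^ 2 ≤
        |‖f (X ω) - f (Y ω)‖ ^ 2 - dist (X ω) (Y ω) ^ 2| + (1 / 2) * S ω := by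
      intro ω
      have h1 := hkey ω
      have h2' := habs (c ω) 1 (dist (X ω) (Y ω) ^ 2 - ‖f (X ω) - f (Y ω)‖ ^ 2)
        (hc0 ω) ((hcκ ω).trans hκ1.le)
      rw [one_mul, abs_sub_comm] at h2'
      nlinarith [h2']
    calc ∫ ω, c ω * dist (X ω) (Y ω) ^ 2 ∂μ
        ≤ ∫ ω, |‖f (X ω) - f (Y ω)‖ ^ 2 - dist (X ω) (Y ω) ^ 2| + (1 / 2) * S ω ∂μ :=
          integral_mono hint3 (hint1.add hSint2) hmono
      _ = (∫ ω, |‖f (X ω) - f (Y ω)‖ ^ 2 - dist (X ω) (Y ω) ^ 2| ∂μ)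
            + ∑ i, γ i * variance (fun ω => f (X ω) i) μ := by
          rw [integral_add hint1 hSint2, hSvar]
  -- Part 2
  have part2 : (γ i0 / 2) * ∫ ω, dist (X ω) (Y ω) ^ 2 ∂μ ≤
      (∫ ω, |‖f (X ω) - f (Y ω)‖ ^ 2 - dist (X ω) (Y ω) ^ 2| ∂μ)
        + ∑ i, γ i * variance (fun ω => f (X ω) i) μ := by
    have hγ01 : γ i0 / 2 ≤ 1 := by have := hγle i0; linarith
    have hmono : ∀ ω, (γ i0 / 2) * dist (X ω) (Y ω) ^ 2 ≤
        |‖f (X ω) - f (Y ω)‖ ^ 2 - dist (X ω) (Y ω) ^ 2| + (1 / 2) * S ω := by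
      intro ω
      have h2' := habs (γ i0 / 2) 1 (dist (X ω) (Y ω) ^ 2 - ‖f (X ω) - f (Y ω)‖ ^ 2)
        (by linarith) hγ01
      rw [one_mul, abs_sub_comm] at h2'
      have hlow : (γ i0 / 2) * ‖f (X ω) - f (Y ω)‖ ^ 2 ≤ (1 / 2) * S ω := by
        rw [hnorm ω, hS, Finset.mul_sum, Finset.mul_sum]
        refine Finset.sum_le_sum fun i _ => ?_
        have := hγmono.monotone (show i0 ≤ i by simp [hi0, Fin.le_def])
        nlinarith [sq_nonneg (f (X ω) i - f (Y ω) i)]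
      nlinarith [h2']
    calc (γ i0 / 2) * ∫ ω, dist (X ω) (Y ω) ^ 2 ∂μ
        = ∫ ω, (γ i0 / 2) * dist (X ω) (Y ω) ^ 2 ∂μ := by
          rw [MeasureTheory.integral_const_mul]
      _ ≤ ∫ ω, |‖f (X ω) - f (Y ω)‖ ^ 2 - dist (X ω) (Y ω) ^ 2| + (1 / 2) * S ω ∂μ :=
          integral_mono (hint2.const_mul _) (hint1.add hSint2) hmono
      _ = (∫ ω, |‖f (X ω) - f (Y ω)‖ ^ 2 - dist (X ω) (Y ω) ^ 2| ∂μ)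
            + ∑ i, γ i * variance (fun ω => f (X ω) i) μ := by
          rw [integral_add hint1 hSint2, hSvar]
  refine ⟨part1, part2, ?_⟩
  -- Part 3
  constructor
  · intro heq
    set Φ : Ω → ℝ := fun ω =>
      |‖f (X ω) - f (Y ω)‖ ^ 2 - dist (X ω) (Y ω) ^ 2| + (1 / 2) * S ω
        - c ω * dist (X ω) (Y ω) ^ 2 with hΦ
    have hΦint : Integrable Φ μ := (hint1.add hSint2).sub hint3
    have hΦlb : ∀ ω, (1 - κ) * |‖f (X ω) - f (Y ω)‖ ^ 2 - dist (X ω) (Y ω) ^ 2| ≤ Φ ω := by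
      intro ω
      have h1 := hkey ω
      have h2' := habs (c ω) κ (dist (X ω) (Y ω) ^ 2 - ‖f (X ω) - f (Y ω)‖ ^ 2)
        (hc0 ω) (hcκ ω)
      rw [abs_sub_comm] at h2'
      simp only [hΦ]
      nlinarith [h2']
    have hΦnn : 0 ≤ᵐ[μ] Φ := Filter.Eventually.of_forall fun ω =>
      le_trans (mul_nonneg (by linarith) (abs_nonneg _)) (hΦlb ω)
    have hΦ0 : ∫ ω, Φ ω ∂μ = 0 := by
      simp only [hΦ]
      rw [integral_sub (by exact hint1.add hSint2) hint3, integral_add hint1 hSint2, hSvar]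
      linarith [heq]
    have hΦae : Φ =ᵐ[μ] 0 := (integral_eq_zero_iff_of_nonneg_ae hΦnn hΦint).1 hΦ0
    filter_upwards [hΦae] with ω hω
    have hω0 : Φ ω = 0 := hω
    have hlb : (1 - κ) * |‖f (X ω) - f (Y ω)‖ ^ 2 - dist (X ω) (Y ω) ^ 2| ≤ (1 - κ) * 0 := by
      rw [mul_zero, ← hω0]; exact hΦlb ω
    have h1κ : 0 < 1 - κ := by linarith
    have hA : |‖f (X ω) - f (Y ω)‖ ^ 2 - dist (X ω) (Y ω) ^ 2| ≤ 0 :=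
      le_of_mul_le_mul_left hlb h1κ
    have := abs_eq_zero.1 (le_antisymm hA (abs_nonneg _))
    linarith
  · intro hae
    have hA : ∫ ω, |‖f (X ω) - f (Y ω)‖ ^ 2 - dist (X ω) (Y ω) ^ 2| ∂μ = 0 := by
      rw [show (0 : ℝ) = ∫ _ : Ω, (0 : ℝ) ∂μ by simp]
      apply integral_congr_ae
      filter_upwards [hae] with ω hω
      rw [hω]; simp
    have hC : ∫ ω, c ω * dist (X ω) (Y ω) ^ 2 ∂μ = ∫ ω, (1 / 2) * S ω ∂μ := by
      apply integral_congr_ae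
      filter_upwards [hae] with ω hω
      rw [← hω, hkey ω]
    rw [hA, hC, hSvar, zero_add]
end
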